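/- For a 2×2 density matrix ρ with eigenvalues λ₁, λ₂ and eigenvectors |λ₁⟩, |λ₂⟩, and any 2×2 matrix σ, the variances of σ in the two eigenstates coincide: ⟨Δσ⟩²_{λ₁} = ⟨Δσ⟩²_{λ₂}, where ⟨Δσ⟩²_{ψ} = (1/2)⟨ψ|(σ†σ + σσ†)|ψ⟩ − |⟨ψ|σ|ψ⟩|². -/

import Mathlib

open Matrix
open scoped ComplexOrder

/-- Variance of an arbitrary operator `σ` in a pure state `ψ`:
`⟨Δσ⟩²_ψ = (1/2)⟨ψ|(σ†σ + σσ†)|ψ⟩ − |⟨ψ|σ|ψ⟩|²`. -/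
noncomputable def varVec {d : ℕ} (ψ : Fin d → ℂ) (σ : Matrix (Fin d) (Fin d) ℂ) : ℂ :=
  (1 / 2 : ℂ) * (star ψ ⬝ᵥ ((σᴴ * σ + σ * σᴴ) *ᵥ ψ)) -
    (‖star ψ ⬝ᵥ (σ *ᵥ ψ)‖ : ℂ) ^ 2

theorem stmt10 (ρ σ : Matrix (Fin 2) (Fin 2) ℂ)
    (hρ : ρ.PosSemidef) (htr : ρ.trace = 1)
    (u₁ u₂ : Fin 2 → ℂ) (l₁ l₂ : ℝ)
    (hn₁ : star u₁ ⬝ᵥ u₁ = 1) (hn₂ : star u₂ ⬝ᵥ u₂ = 1) (ho : star u₁ ⬝ᵥ u₂ = 0)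
    (he₁ : ρ *ᵥ u₁ = (l₁ : ℂ) • u₁) (he₂ : ρ *ᵥ u₂ = (l₂ : ℂ) • u₂) :
    varVec u₁ σ = varVec u₂ σ := by
  have ho' : star u₂ ⬝ᵥ u₁ = 0 := by
    have := congrArg (starRingEnd ℂ) ho
    simpa [dotProduct, Fin.sum_univ_two, map_add, _root_.map_mul, mul_comm] using this
  have hAA : (Matrix.of ![star u₁, star u₂]) * (Matrix.of ![star u₁, star u₂])ᴴ = 1 := by
    ext i j
    fin_cases i <;> fin_cases j <;>
      simp_all [Matrix.mul_apply, Matrix.conjTranspose_apply, dotProduct,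
        Fin.sum_univ_two, Matrix.one_apply, mul_comm]
  have hAA' : (Matrix.of ![star u₁, star u₂])ᴴ * (Matrix.of ![star u₁, star u₂]) = 1 :=
    mul_eq_one_comm.mp hAA
  have h : ∀ i j, u₁ i * (starRingEnd ℂ) (u₁ j) + u₂ i * (starRingEnd ℂ) (u₂ j)
      = (1 : Matrix (Fin 2) (Fin 2) ℂ) i j := by
    intro i j
    have := congrFun (congrFun hAA' i) j
    simpa [Matrix.mul_apply, Matrix.conjTranspose_apply, Fin.sum_univ_two, mul_comm]
      using this
  have key : ∀ v w : Fin 2 → ℂ, star v ⬝ᵥ w =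
      (star v ⬝ᵥ u₁) * (star u₁ ⬝ᵥ w) + (star v ⬝ᵥ u₂) * (star u₂ ⬝ᵥ w) := by
    intro v w
    have h00 := h 0 0; have h01 := h 0 1; have h10 := h 1 0; have h11 := h 1 1
    simp only [Matrix.one_apply_eq, Matrix.one_apply_ne, Ne,
      show ((0:Fin 2) = 1) ↔ False by simp, show ((1:Fin 2) = 0) ↔ False by simp,
      not_false_iff] at h00 h01 h10 h11
    simp only [dotProduct, Fin.sum_univ_two, Pi.star_apply, RCLike.star_def]
    linear_combination (-((starRingEnd ℂ) (v 0) * w 0)) * h00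
      + (-((starRingEnd ℂ) (v 0) * w 1)) * h01
      + (-((starRingEnd ℂ) (v 1) * w 0)) * h10
      + (-((starRingEnd ℂ) (v 1) * w 1)) * h11
  have hadj : ∀ (M : Matrix (Fin 2) (Fin 2) ℂ) (v w : Fin 2 → ℂ),
      star v ⬝ᵥ (Mᴴ *ᵥ w) = star (M *ᵥ v) ⬝ᵥ w := by
    intro M v w
    simp only [dotProduct, mulVec, Matrix.conjTranspose_apply, Fin.sum_univ_two,
      Pi.star_apply, RCLike.star_def, map_add, _root_.map_mul, Complex.conj_conj]
    ring
  have hconj : ∀ v w : Fin 2 → ℂ, star v ⬝ᵥ w = (starRingEnd ℂ) (star w ⬝ᵥ v) := by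
    intro v w
    simp only [dotProduct, Fin.sum_univ_two, Pi.star_apply, RCLike.star_def,
      map_add, _root_.map_mul, Complex.conj_conj]
    ring
  set a := star u₁ ⬝ᵥ (σ *ᵥ u₁) with ha
  set b := star u₁ ⬝ᵥ (σ *ᵥ u₂) with hb
  set c := star u₂ ⬝ᵥ (σ *ᵥ u₁) with hc
  set d := star u₂ ⬝ᵥ (σ *ᵥ u₂) with hd
  have habs : ∀ z : ℂ, ((‖z‖ : ℝ) : ℂ) ^ 2 = (starRingEnd ℂ) z * z := by
    intro z
    rw [← Complex.ofReal_pow, Complex.sq_norm, Complex.normSq_eq_conj_mul_self]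
  have q1 : star u₁ ⬝ᵥ ((σᴴ * σ + σ * σᴴ) *ᵥ u₁)
      = ((starRingEnd ℂ) a * a + (starRingEnd ℂ) c * c)
        + (a * (starRingEnd ℂ) a + b * (starRingEnd ℂ) b) := by
    rw [Matrix.add_mulVec, dotProduct_add, ← Matrix.mulVec_mulVec, ← Matrix.mulVec_mulVec]
    rw [hadj σ u₁ (σ *ᵥ u₁), key (σ *ᵥ u₁) (σ *ᵥ u₁)]
    rw [show σ *ᵥ (σᴴ *ᵥ u₁) = σᴴᴴ *ᵥ (σᴴ *ᵥ u₁) by rw [conjTranspose_conjTranspose]]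
    rw [hadj σᴴ u₁ (σᴴ *ᵥ u₁), key (σᴴ *ᵥ u₁) (σᴴ *ᵥ u₁)]
    rw [hconj (σ *ᵥ u₁) u₁, hconj (σ *ᵥ u₁) u₂]
    rw [hconj (σᴴ *ᵥ u₁) u₁, hconj (σᴴ *ᵥ u₁) u₂]
    rw [hadj σ u₁ u₁, hadj σ u₂ u₁]
    rw [hconj (σ *ᵥ u₁) u₁, hconj (σ *ᵥ u₂) u₁]
    rw [← ha, ← hc, ← hb]
    simp only [Complex.conj_conj]
  have q2 : star u₂ ⬝ᵥ ((σᴴ * σ + σ * σᴴ) *ᵥ u₂)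
      = ((starRingEnd ℂ) b * b + (starRingEnd ℂ) d * d)
        + (c * (starRingEnd ℂ) c + d * (starRingEnd ℂ) d) := by
    rw [Matrix.add_mulVec, dotProduct_add, ← Matrix.mulVec_mulVec, ← Matrix.mulVec_mulVec]
    rw [hadj σ u₂ (σ *ᵥ u₂), key (σ *ᵥ u₂) (σ *ᵥ u₂)]
    rw [show σ *ᵥ (σᴴ *ᵥ u₂) = σᴴᴴ *ᵥ (σᴴ *ᵥ u₂) by rw [conjTranspose_conjTranspose]]
    rw [hadj σᴴ u₂ (σᴴ *ᵥ u₂), key (σᴴ *ᵥ u₂) (σᴴ *ᵥ u₂)]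
    rw [hconj (σ *ᵥ u₂) u₁, hconj (σ *ᵥ u₂) u₂]
    rw [hconj (σᴴ *ᵥ u₂) u₁, hconj (σᴴ *ᵥ u₂) u₂]
    rw [hadj σ u₁ u₂, hadj σ u₂ u₂]
    rw [hconj (σ *ᵥ u₁) u₂, hconj (σ *ᵥ u₂) u₂]
    rw [← hb, ← hc, ← hd]
    simp only [Complex.conj_conj]
  unfold varVec
  rw [q1, q2, ← ha, ← hd, habs a, habs d]
  ring
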